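/- Let ⟨P,<⟩ be a locally finite lattice with a least element satisfying the finitary lower covering condition, and let a < b in P with a not ≤ inf(cov(b)), where cov(b) is the set of elements covered by b. Then there is a unique saturated chain in the interval [a,b]. -/

import Mathlib

section Aux

variable {P : Type*} [Lattice P] [OrderBot P]

omit [OrderBot P] in
private lemma myHeadLeLast : ∀ {l : List P}, l.Chain' (· < ·) →
    ∀ {x y : P}, l.head? = some x → l.getLast? = some y → x ≤ y := by
  intro l
  induction l with
  | nil => intro _ x y hx; simp at hx
  | cons hd tl ih =>
    intro hc x y hx hy
    have hhd : hd = x := by simpa using hx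
    subst hhd
    cases tl with
    | nil => exact le_of_eq (by simpa using hy)
    | cons hd' tl' =>
      have h1 : hd < hd' := (List.isChain_cons_cons.mp hc).1
      have h2 : (hd' :: tl').Chain' (· < ·) := (List.isChain_cons_cons.mp hc).2
      have hy' : (hd' :: tl').getLast? = some y := by
        rw [← hy]; simp [List.getLast?_cons_cons]
      exact le_of_lt (lt_of_lt_of_le h1 (ih h2 rfl hy'))

omit [OrderBot P] in
private lemma mySingleton {l : List P} (hc : l.Chain' (· < ·)) {x : P}
    (hx : l.head? = some x) (hy : l.getLast? = some x) : l = [x] := by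
  cases l with
  | nil => simp at hx
  | cons hd tl =>
    have hhd : hd = x := by simpa using hx
    subst hhd
    cases tl with
    | nil => rfl
    | cons hd' tl' =>
      have h1 : hd < hd' := (List.isChain_cons_cons.mp hc).1
      have h2 : (hd' :: tl').Chain' (· < ·) := (List.isChain_cons_cons.mp hc).2
      have hy' : (hd' :: tl').getLast? = some hd := by
        rw [← hy]; simp [List.getLast?_cons_cons]
      exact absurd (lt_of_lt_of_le h1 (myHeadLeLast h2 rfl hy')) (lt_irrefl hd)

omit [OrderBot P] in
private lemma myExistsCover (hlf : ∀ a b : P, {c | a ≤ c ∧ c ≤ b}.Finite)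
    {a b : P} (h : a < b) : ∃ c, a ≤ c ∧ c ⋖ b := by
  have hS : {x : P | a ≤ x ∧ x < b}.Finite :=
    (hlf a b).subset (fun x hx => ⟨hx.1, hx.2.le⟩)
  obtain ⟨c, hc, hmax⟩ := Set.Finite.exists_maximalFor id _ hS ⟨a, le_refl a, h⟩
  refine ⟨c, hc.1, hc.2, fun y h1 h2 => ?_⟩
  have : y ∈ {x : P | a ≤ x ∧ x < b} := ⟨hc.1.trans h1.le, h2⟩
  exact h1.ne (le_antisymm h1.le (hmax this h1.le))

private lemma myCoverUnique (hlf : ∀ a b : P, {c | a ≤ c ∧ c ≤ b}.Finite)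
    (hcov : ∀ M : Finset P, 2 ≤ M.card →
      (∃ b, ∀ a ∈ M, a ⋖ b) → ∃ c, ∀ a ∈ M, c ⋖ a)
    {a b m : P} (hm : IsGLB {c | c ⋖ b} m) (ham : ¬ a ≤ m)
    {c d : P} (hc : c ⋖ b) (hd : d ⋖ b) (hac : a ≤ c) (had : a ≤ d) : c = d := by
  by_contra hne
  have hSfin : {x : P | x ⋖ b}.Finite :=
    (hlf ⊥ b).subset (fun x hx => ⟨bot_le, hx.le⟩)
  have hcF : c ∈ hSfin.toFinset := hSfin.mem_toFinset.mpr hc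
  have hdF : d ∈ hSfin.toFinset := hSfin.mem_toFinset.mpr hd
  have hcard : 2 ≤ hSfin.toFinset.card := Finset.one_lt_card.mpr ⟨c, hcF, d, hdF, hne⟩
  obtain ⟨e, he⟩ := hcov _ hcard ⟨b, fun x hx => hSfin.mem_toFinset.mp hx⟩
  have hec : e ⋖ c := he c hcF
  have hed : e ⋖ d := he d hdF
  have hcd : c ⊓ d < c := by
    rcases lt_or_eq_of_le (inf_le_left : c ⊓ d ≤ c) with h | h
    · exact h
    · exfalso
      have hcd' : c ≤ d := h ▸ inf_le_right
      rcases lt_or_eq_of_le hcd' with h' | h'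
      · exact hc.2 h' hd.1
      · exact hne h'
  have hecd : e ≤ c ⊓ d := le_inf hec.1.le hed.1.le
  have hecd' : e = c ⊓ d := by
    rcases lt_or_eq_of_le hecd with h | h
    · exact absurd hcd (hec.2 h)
    · exact h
  have haE : a ≤ e := hecd' ▸ le_inf hac had
  have hLB : e ∈ lowerBounds {x : P | x ⋖ b} :=
    fun x hx => (he x (hSfin.mem_toFinset.mpr hx)).1.le
  exact ham (haE.trans (hm.2 hLB))

private lemma myAux (hlf : ∀ a b : P, {c | a ≤ c ∧ c ≤ b}.Finite)
    (hcov : ∀ M : Finset P, 2 ≤ M.card →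
      (∃ b, ∀ a ∈ M, a ⋖ b) → ∃ c, ∀ a ∈ M, c ⋖ a) :
    ∀ n : ℕ, ∀ a b m : P, (hlf a b).toFinset.card ≤ n → a < b →
      IsGLB {c | c ⋖ b} m → ¬ a ≤ m →
      ∃! t : List P, t.Chain' (· ⋖ ·) ∧ t.head? = some a ∧ t.getLast? = some b := by
  intro n
  induction n with
  | zero =>
    intro a b m hcard hab hm ham
    exfalso
    have h1 : a ∈ (hlf a b).toFinset := (hlf a b).mem_toFinset.mpr ⟨le_refl a, hab.le⟩
    have h2 := Finset.card_pos.mpr ⟨a, h1⟩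
    omega
  | succ n ih =>
    intro a b m hcard hab hm ham
    obtain ⟨c, hac, hcb⟩ := myExistsCover hlf hab
    have decomp : ∀ t : List P, t.Chain' (· ⋖ ·) → t.head? = some a →
        t.getLast? = some b →
        ∃ s : List P, t = s ++ [b] ∧ s ≠ [] ∧ s.Chain' (· ⋖ ·) ∧
          s.head? = some a ∧ s.getLast? = some c := by
      intro t htc hth htl
      rcases List.eq_nil_or_concat t with h | ⟨s, x, h⟩
      · subst h; simp at hth
      · rw [List.concat_eq_append] at h
        subst h
        have hx : x = b := by
          rw [List.getLast?_concat] at htl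
          injection htl
        rw [hx] at htc hth ⊢
        cases s with
        | nil =>
          exfalso
          simp only [List.nil_append, List.head?_cons, Option.some.injEq] at hth
          exact hab.ne hth.symm
        | cons y s' =>
          have hhead : y = a := by simpa using hth
          subst hhead
          obtain ⟨hs1, _, hs3⟩ := List.isChain_append.mp htc
          obtain ⟨c', hc'⟩ := Option.isSome_iff_exists.mp
            (List.getLast?_isSome.mpr (by simp : (y :: s') ≠ []))
          have hc'b : c' ⋖ b := hs3 c' hc' b rfl
          have hac' : y ≤ c' :=
            myHeadLeLast (hs1.imp fun _ _ h => h.1) rfl hc'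
          have hcc : c' = c := myCoverUnique hlf hcov hm ham hc'b hcb hac' hac
          exact ⟨y :: s', rfl, by simp, hs1, rfl, hcc ▸ hc'⟩
    rcases eq_or_lt_of_le hac with hEq | hlt
    · -- a = c, so a ⋖ b, chain is [a, b]
      subst hEq
      refine ⟨[a, b], ⟨List.isChain_pair.mpr hcb, rfl, rfl⟩, ?_⟩
      rintro t ⟨htc, hth, htl⟩
      obtain ⟨s, rfl, hsne, hsc, hsh, hsl⟩ := decomp t htc hth htl
      have hs : s = [a] := mySingleton (hsc.imp fun _ _ h => h.1) hsh hsl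
      rw [hs]; rfl
    · -- a < c : induct
      obtain ⟨c₀, hac₀, hc₀⟩ := myExistsCover hlf hlt
      have hSfin : {x : P | x ⋖ c}.Finite :=
        (hlf ⊥ c).subset (fun x hx => ⟨bot_le, hx.le⟩)
      have hne : hSfin.toFinset.Nonempty := ⟨c₀, hSfin.mem_toFinset.mpr hc₀⟩
      set m' := hSfin.toFinset.inf' hne id with hm'def
      have hm' : IsGLB {x : P | x ⋖ c} m' := by
        constructor
        · intro x hx
          exact Finset.inf'_le id (hSfin.mem_toFinset.mpr hx)
        · intro lb hlb
          exact Finset.le_inf' hne id (fun x hx => hlb (hSfin.mem_toFinset.mp hx))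
      have hd : ∃ d, d ⋖ b ∧ d ≠ c := by
        by_contra h
        push_neg at h
        have hclb : c ∈ lowerBounds {x : P | x ⋖ b} := fun x hx => (h x hx).ge
        exact ham (hac.trans (hm.2 hclb))
      obtain ⟨d, hdb, hdc⟩ := hd
      have hmc : m ⋖ c := by
        have hSbfin : {x : P | x ⋖ b}.Finite :=
          (hlf ⊥ b).subset (fun x hx => ⟨bot_le, hx.le⟩)
        have hcF : c ∈ hSbfin.toFinset := hSbfin.mem_toFinset.mpr hcb
        have hdF : d ∈ hSbfin.toFinset := hSbfin.mem_toFinset.mpr hdb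
        have hcard2 : 2 ≤ hSbfin.toFinset.card :=
          Finset.one_lt_card.mpr ⟨d, hdF, c, hcF, hdc⟩
        obtain ⟨e, he⟩ := hcov _ hcard2 ⟨b, fun x hx => hSbfin.mem_toFinset.mp hx⟩
        have hec : e ⋖ c := he c hcF
        have heLB : e ∈ lowerBounds {x : P | x ⋖ b} :=
          fun x hx => (he x (hSbfin.mem_toFinset.mpr hx)).1.le
        have hem : e ≤ m := hm.2 heLB
        have hmlt : m < c := by
          rcases lt_or_eq_of_le (hm.1 hcb) with h | h
          · exact h
          · exfalso
            have hcd : c ≤ d := h ▸ hm.1 hdb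
            rcases lt_or_eq_of_le hcd with h' | h'
            · exact hcb.2 h' hdb.1
            · exact hdc h'.symm
        have hem' : e = m := by
          rcases lt_or_eq_of_le hem with h | h
          · exact absurd hmlt (hec.2 h)
          · exact h
        exact hem' ▸ hec
      have ham' : ¬ a ≤ m' := fun h => ham (h.trans (hm'.1 hmc))
      have hsub : (hlf a c).toFinset ⊆ (hlf a b).toFinset := by
        intro x hx
        have hx' := (hlf a c).mem_toFinset.mp hx
        exact (hlf a b).mem_toFinset.mpr ⟨hx'.1, hx'.2.trans hcb.1.le⟩
      have hbmem : b ∈ (hlf a b).toFinset :=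
        (hlf a b).mem_toFinset.mpr ⟨hab.le, le_refl b⟩
      have hbnot : b ∉ (hlf a c).toFinset := fun h =>
        absurd ((hlf a c).mem_toFinset.mp h).2 hcb.1.not_ge
      have hcard' : (hlf a c).toFinset.card ≤ n := by
        have := Finset.card_lt_card (Finset.ssubset_iff_of_subset hsub |>.mpr ⟨b, hbmem, hbnot⟩)
        omega
      obtain ⟨s, ⟨hs1, hs2, hs3⟩, hsu⟩ := ih a c m' hcard' hlt hm' ham'
      have hsnil : s ≠ [] := by rintro rfl; simp at hs2
      refine ⟨s ++ [b], ⟨?_, ?_, ?_⟩, ?_⟩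
      · exact List.isChain_append.mpr ⟨hs1, List.isChain_singleton b,
          fun x hx y hy => by
            simp only [List.head?_cons, Option.mem_def, Option.some.injEq] at hy
            rw [Option.mem_def, hs3] at hx
            injection hx with hx
            subst hx; subst hy; exact hcb⟩
      · cases s with
        | nil => exact absurd rfl hsnil
        | cons z s' => simpa using hs2
      · exact List.getLast?_concat
      · rintro t ⟨htc, hth, htl⟩
        obtain ⟨s', rfl, hsne, hsc, hsh, hsl⟩ := decomp t htc hth htl
        rw [hsu s' ⟨hsc, hsh, hsl⟩]

end Aux

/-- In a locally finite lattice with a least element satisfying the finitary lower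
covering condition, if `a < b` and `a` is not below `inf(cov(b))`, then there is a
unique saturated chain in the interval `[a, b]`. -/
theorem unique_saturated_chain {P : Type*} [Lattice P] [OrderBot P]
    (hlf : ∀ a b : P, {c | a ≤ c ∧ c ≤ b}.Finite)
    (hcov : ∀ M : Finset P, 2 ≤ M.card →
      (∃ b, ∀ a ∈ M, a ⋖ b) → ∃ c, ∀ a ∈ M, c ⋖ a)
    (a b m : P) (hab : a < b) (hm : IsGLB {c | c ⋖ b} m) (ham : ¬ a ≤ m) :
    ∃! t : List P, t.Chain' (· ⋖ ·) ∧ t.head? = some a ∧ t.getLast? = some b := by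
  exact myAux hlf hcov ((hlf a b).toFinset.card) a b m le_rfl hab hm ham
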